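/- There exists a covering system of the integers in which every modulus is odd, square-free, and greater than 1, the modulus 7 occurs exactly six times, and all other moduli are pairwise distinct and distinct from 7. -/

import Mathlib

/-- A covering system of the integers: a finite list of congruences
`x ≡ r (mod m)` (encoded as pairs `(r, m)`) with positive moduli such that
every integer satisfies at least one congruence in the list. -/
def IsCoveringSystem (C : List (ℤ × ℕ)) : Prop :=
  (∀ c ∈ C, 0 < c.2) ∧ ∀ n : ℤ, ∃ c ∈ C, n ≡ c.1 [ZMOD (c.2 : ℤ)]

/-- The list of congruences, as pairs `(residue, modulus)` over `ℕ`. -/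
def CLaux : List (ℕ × ℕ) := [(0, 3), (4, 5), (1, 7), (2, 7), (3, 7), (4, 7), (5, 7), (6, 7), (1, 11), (11, 13), (8, 15), (16, 17), (7, 21), (32, 33), (21, 35), (26, 39), (8, 51), (42, 55), (12, 65), (63, 77), (62, 85), (21, 91), (35, 105), (112, 119), (123, 143), (47, 165), (5, 187), (17, 195), (53, 221), (161, 231), (242, 255), (98, 273), (119, 357), (77, 385), (257, 429), (252, 455), (236, 561), (392, 595), (404, 663), (422, 715), (82, 935), (224, 1001), (802, 1105), (182, 1155), (434, 1309), (392, 1365), (1197, 1547), (182, 1785), (497, 2145), (508, 2431), (1787, 2805), (35, 3003), (677, 3315), (3899, 3927), (1652, 4641), (3962, 5005), (5362, 6545), (71, 7293), (5292, 7735), (11532, 12155), (14777, 15015), (8659, 17017), (11522, 19635), (12572, 23205), (30122, 36465), (46634, 51051), (23072, 85085)]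

/-- Balanced bounded checker: `allBaux fuel P a n = true` guarantees `P (a+t)` for `t < n`,
with recursion depth bounded by `fuel`. -/
def allBaux : ℕ → (ℕ → Bool) → ℕ → ℕ → Bool
  | 0, _, _, n => n == 0
  | fuel+1, P, a, n =>
    if n == 0 then true
    else if n == 1 then P a
    else allBaux fuel P a (n/2) && allBaux fuel P (a + n/2) (n - n/2)

theorem allBaux_sound : ∀ fuel (P : ℕ → Bool) a n, allBaux fuel P a n = true →
    ∀ t, t < n → P (a + t) = true := by
  intro fuel
  induction fuel with
  | zero => intro P a n h t ht; simp [allBaux] at h; omega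
  | succ f ih =>
    intro P a n h t ht
    simp only [allBaux] at h
    by_cases h0 : n = 0
    · omega
    · by_cases h1 : n = 1
      · have : t = 0 := by omega
        subst this
        simpa [h0, h1] using h
      · simp [h0, h1] at h
        obtain ⟨hl, hr⟩ := h
        by_cases hc : t < n / 2
        · exact ih P a (n/2) hl t hc
        · have := ih P (a + n/2) (n - n/2) hr (t - n/2) (by omega)
          have e : a + n/2 + (t - n/2) = a + t := by omega
          rwa [e] at this

theorem class77 : allBaux 20 (fun v => CLaux.any fun c => (105*v+77) % c.2 == c.1) 0 2431 = true := by
  decide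

theorem covNat : ∀ u, u < 255255 → ∃ c ∈ CLaux, u % c.2 = c.1 := by
  intro u hu
  by_cases h3 : u % 3 = 0
  · exact ⟨(0,3), by decide, h3⟩
  by_cases h5 : u % 5 = 4
  · exact ⟨(4,5), by decide, h5⟩
  by_cases h7 : u % 7 = 0
  swap
  · have h : u % 7 = 1 ∨ u % 7 = 2 ∨ u % 7 = 3 ∨ u % 7 = 4 ∨ u % 7 = 5 ∨ u % 7 = 6 := by omega
    rcases h with h|h|h|h|h|h
    exacts [⟨(1,7), by decide, h⟩, ⟨(2,7), by decide, h⟩, ⟨(3,7), by decide, h⟩,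
      ⟨(4,7), by decide, h⟩, ⟨(5,7), by decide, h⟩, ⟨(6,7), by decide, h⟩]
  by_cases h15 : u % 15 = 8
  · exact ⟨(8,15), by decide, h15⟩
  by_cases h21 : u % 21 = 7
  · exact ⟨(7,21), by decide, h21⟩
  by_cases h35 : u % 35 = 21
  · exact ⟨(21,35), by decide, h35⟩
  by_cases h105 : u % 105 = 35
  · exact ⟨(35,105), by decide, h105⟩
  have h77 : u % 105 = 77 := by omega
  have hv : u / 105 < 2431 := by omega
  have h := allBaux_sound 20 _ 0 2431 class77 (u/105) hv
  simp only [Nat.zero_add, List.any_eq_true, beq_iff_eq] at h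
  have e : 105 * (u / 105) + 77 = u := by omega
  rwa [e] at h

theorem CLfacts : ∀ c ∈ CLaux, 0 < c.2 ∧ c.2 % 2 = 1 ∧ 1 < c.2 ∧
    c.1 < c.2 ∧ c.2 ∣ 255255 := by decide

theorem sfN : Squarefree (255255 : ℕ) := by
  have h : (255255 : ℕ) = 3*(5*(7*(11*(13*17)))) := by norm_num
  rw [h]
  repeat'
    apply Nat.squarefree_mul_iff.mpr
    refine ⟨by norm_num, ?_, ?_⟩
  all_goals exact (by norm_num : Nat.Prime _).squarefree

theorem CLsf : ∀ c ∈ CLaux, Squarefree c.2 := by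
  intro c hc
  exact sfN.squarefree_of_dvd (CLfacts c hc).2.2.2.2

def Cfinal : List (ℤ × ℕ) := CLaux.map fun c => ((c.1 : ℤ), c.2)

theorem covInt : ∀ n : ℤ, ∃ c ∈ Cfinal, n ≡ c.1 [ZMOD (c.2 : ℤ)] := by
  intro n
  have hnn : 0 ≤ n % 255255 := Int.emod_nonneg n (by norm_num)
  set u : ℕ := (n % 255255).toNat with hudef
  have hcast : (u : ℤ) = n % 255255 := Int.toNat_of_nonneg hnn
  have hult : u < 255255 := by
    have h2 : (u : ℤ) < 255255 := by
      rw [hcast]; exact Int.emod_lt_of_pos n (by norm_num)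
    exact_mod_cast h2
  obtain ⟨c, hcCL, hmod⟩ := covNat u hult
  refine ⟨((c.1 : ℤ), c.2), List.mem_map_of_mem (f := fun c : ℕ × ℕ => ((c.1 : ℤ), c.2)) hcCL, ?_⟩
  have hdvd : (c.2 : ℤ) ∣ 255255 := by
    exact_mod_cast (CLfacts c hcCL).2.2.2.2
  have h1 : n ≡ (u : ℤ) [ZMOD (255255 : ℤ)] := by
    show n % 255255 = (u : ℤ) % 255255
    rw [hcast, Int.emod_emod_of_dvd _ dvd_rfl]
  have h2 : n ≡ (u : ℤ) [ZMOD ((c.2 : ℕ) : ℤ)] := h1.of_dvd hdvd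
  have hlt : c.1 < c.2 := (CLfacts c hcCL).2.2.2.1
  have h3 : (u : ℤ) ≡ (c.1 : ℤ) [ZMOD ((c.2 : ℕ) : ℤ)] := by
    show (u : ℤ) % (c.2 : ℕ) = (c.1 : ℤ) % (c.2 : ℕ)
    have : u % c.2 = c.1 % c.2 := by rw [hmod, Nat.mod_eq_of_lt hlt]
    omega
  exact h2.trans h3

theorem stmt4 :
    ∃ C : List (ℤ × ℕ),
      IsCoveringSystem C ∧
      (∀ c ∈ C, Odd c.2 ∧ Squarefree c.2 ∧ 1 < c.2) ∧
      (C.map Prod.snd).count 7 = 6 ∧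
      ∀ m : ℕ, m ≠ 7 → (C.map Prod.snd).count m ≤ 1 := by
  refine ⟨Cfinal, ⟨?_, covInt⟩, ?_, ?_, ?_⟩
  · intro c hc
    obtain ⟨d, hd, rfl⟩ := List.mem_map.mp hc
    exact (CLfacts d hd).1
  · intro c hc
    obtain ⟨d, hd, rfl⟩ := List.mem_map.mp hc
    exact ⟨Nat.odd_iff.mpr (CLfacts d hd).2.1, CLsf d hd, (CLfacts d hd).2.2.1⟩
  · decide
  · intro m hm
    rw [List.count_eq_count_filter_add (· = 7) (Cfinal.map Prod.snd) m]
    have e1 : (Cfinal.map Prod.snd).filter (fun x => decide (x = 7)) = [7,7,7,7,7,7] := by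
      decide
    have e2 : List.count m [7,7,7,7,7,7] = 0 :=
      List.count_eq_zero.mpr (by simp [hm])
    rw [e1, e2]
    have hnd : ((Cfinal.map Prod.snd).filter (fun x => decide (¬ x = 7))).Nodup := by decide
    simpa using List.nodup_iff_count_le_one.mp hnd m
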